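/- For all integers a, b, c, d, e: (P(d−c)·Q(e−b) − P(e−c)·Q(d−b))·P(c−a) = (P(e−a)·P(d−c) − P(d−a)·P(e−c))·Q(c−b). -/

import Mathlib

/-- Two sequences satisfying the Pell recurrence over ℤ that agree at 0 and 1 agree everywhere. -/
lemma pell_uniq (f g : ℤ → ℤ)
    (hf : ∀ n : ℤ, f n = 2 * f (n - 1) + f (n - 2))
    (hg : ∀ n : ℤ, g n = 2 * g (n - 1) + g (n - 2))
    (h0 : f 0 = g 0) (h1 : f 1 = g 1) : ∀ n : ℤ, f n = g n := by
  have key : ∀ n : ℤ, f n = g n ∧ f (n + 1) = g (n + 1) := by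
    intro n
    induction n using Int.induction_on with
    | zero => exact ⟨h0, by simpa using h1⟩
    | succ k ih =>
      refine ⟨ih.2, ?_⟩
      have hf' := hf ((k : ℤ) + 1 + 1)
      have hg' := hg ((k : ℤ) + 1 + 1)
      have e1 : (k : ℤ) + 1 + 1 - 1 = (k : ℤ) + 1 := by ring
      have e2 : (k : ℤ) + 1 + 1 - 2 = (k : ℤ) := by ring
      rw [e1, e2] at hf' hg'
      rw [hf', hg', ih.1, ih.2]
    | pred k ih =>
      have hf' := hf (-(k : ℤ) + 1)
      have hg' := hg (-(k : ℤ) + 1)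
      have e1 : -(k : ℤ) + 1 - 1 = -(k : ℤ) := by ring
      have e2 : -(k : ℤ) + 1 - 2 = -(k : ℤ) - 1 := by ring
      rw [e1, e2] at hf' hg'
      have e4 : -(k : ℤ) - 1 + 1 = -(k : ℤ) := by ring
      refine ⟨by linarith [ih.1, ih.2], ?_⟩
      rw [e4]
      exact ih.1
  exact fun n => (key n).1

/-- Corollary identity for Pell and Pell–Lucas numbers. -/
theorem stmt_9 (P Q : ℤ → ℤ)
    (hP0 : P 0 = 0) (hP1 : P 1 = 1)
    (hP : ∀ n : ℤ, P n = 2 * P (n - 1) + P (n - 2))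
    (hQ0 : Q 0 = 2) (hQ1 : Q 1 = 1)
    (hQ : ∀ n : ℤ, Q n = 2 * Q (n - 1) + Q (n - 2))
    (a b c d e : ℤ) :
    (P (d - c) * Q (e - b) - P (e - c) * Q (d - b)) * P (c - a)
      = (P (e - a) * P (d - c) - P (d - a) * P (e - c)) * Q (c - b) := by
  have hP2 : P 2 = 2 := by have := hP 2; norm_num at this; omega
  have hQ2 : Q 2 = 4 := by have := hQ 2; norm_num at this; omega
  -- A : 2 P(m+1) = 3 P m + Q m
  have A : ∀ m : ℤ, 2 * P (m + 1) = 3 * P m + Q m := by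
    refine pell_uniq (fun m => 2 * P (m + 1)) (fun m => 3 * P m + Q m)
      (fun n => ?_) (fun n => ?_) (by simp [hP1, hP0, hQ0]) (by simp [hP2, hP1, hQ1])
    · have := hP (n + 1)
      have e1 : n + 1 - 1 = n - 1 + 1 := by ring
      have e2 : n + 1 - 2 = n - 2 + 1 := by ring
      rw [e1, e2] at this
      linarith
    · have h1 := hP n
      have h2 := hQ n
      linarith
  -- C0 : 2 Q(m+1) = 7 P m + Q m
  have C0 : ∀ m : ℤ, 2 * Q (m + 1) = 7 * P m + Q m := by
    refine pell_uniq (fun m => 2 * Q (m + 1)) (fun m => 7 * P m + Q m)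
      (fun n => ?_) (fun n => ?_) (by simp [hQ1, hP0, hQ0]) (by simp [hQ2, hP1, hQ1])
    · have := hQ (n + 1)
      have e1 : n + 1 - 1 = n - 1 + 1 := by ring
      have e2 : n + 1 - 2 = n - 2 + 1 := by ring
      rw [e1, e2] at this
      linarith
    · have h1 := hP n
      have h2 := hQ n
      linarith
  -- B : 2 P(m+n) = P m (P n + Q n) + (P m + Q m) P n
  have B : ∀ m n : ℤ, 2 * P (m + n) = P m * (P n + Q n) + (P m + Q m) * P n := by
    intro m
    refine pell_uniq (fun n => 2 * P (m + n)) (fun n => P m * (P n + Q n) + (P m + Q m) * P n)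
      (fun n => ?_) (fun n => ?_) ?_ ?_
    · have := hP (m + n)
      have e1 : m + n - 1 = m + (n - 1) := by ring
      have e2 : m + n - 2 = m + (n - 2) := by ring
      rw [e1, e2] at this
      linarith
    · linear_combination (2 * P m + Q m) * hP n + P m * hQ n
    · simp [hP0, hQ0]; ring
    · simp only [hP1, hQ1]
      have := A m
      linarith
  -- C : 2 (P(m+n) + Q(m+n)) = (P m + Q m)(P n + Q n) + 8 P m P n
  have C : ∀ m n : ℤ, 2 * (P (m + n) + Q (m + n))
      = (P m + Q m) * (P n + Q n) + 8 * P m * P n := by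
    intro m
    refine pell_uniq (fun n => 2 * (P (m + n) + Q (m + n)))
      (fun n => (P m + Q m) * (P n + Q n) + 8 * P m * P n)
      (fun n => ?_) (fun n => ?_) ?_ ?_
    · have h1 := hP (m + n)
      have h2 := hQ (m + n)
      have e1 : m + n - 1 = m + (n - 1) := by ring
      have e2 : m + n - 2 = m + (n - 2) := by ring
      rw [e1, e2] at h1 h2
      linarith
    · linear_combination (P m + Q m + 8 * P m) * hP n + (P m + Q m) * hQ n
    · simp [hP0, hQ0]; ring
    · simp only [hP1, hQ1]
      have h1 := A m
      have h2 := C0 m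
      linarith
  -- specialize
  have q1 := C (e - c) (c - b)
  have q1' := B (e - c) (c - b)
  have q2 := C (d - c) (c - b)
  have q2' := B (d - c) (c - b)
  have p1 := B (e - c) (c - a)
  have p2 := B (d - c) (c - a)
  have r1 : e - c + (c - b) = e - b := by ring
  have r2 : d - c + (c - b) = d - b := by ring
  have r3 : e - c + (c - a) = e - a := by ring
  have r4 : d - c + (c - a) = d - a := by ring
  rw [r1] at q1 q1'
  rw [r2] at q2 q2'
  rw [r3] at p1
  rw [r4] at p2
  have key : 2 * ((P (d - c) * Q (e - b) - P (e - c) * Q (d - b)) * P (c - a))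
      = 2 * ((P (e - a) * P (d - c) - P (d - a) * P (e - c)) * Q (c - b)) := by
    linear_combination P (c - a) * P (d - c) * q1 - P (c - a) * P (d - c) * q1'
      - P (c - a) * P (e - c) * q2 + P (c - a) * P (e - c) * q2'
      - Q (c - b) * P (d - c) * p1 + Q (c - b) * P (e - c) * p2
  linarith [key]
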